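/- Fix p, q ∈ ℕ and let W = (Fin p → ℂ) × (Fin q → ℂ) × ℂ. Consider the projectivization ℙ ℂ W (Projectivization, with the quotient topology induced from the subspace {w : W | w ≠ 0}). Let b₊ : (Fin p → ℂ) → ℙ ℂ W be the map u ↦ Projectivization.mk (u, 0, 1) (well-defined since the last coordinate is 1 ≠ 0). Then the closure of the range of b₊ in ℙ ℂ W equals the set {Projectivization.mk (u, 0, c) | (u, c) ≠ (0, 0)}, i.e. the projectivization of the linear subspace (Fin p → ℂ) × {0} × ℂ of W. In particular this closure meets the complement of {Projectivization.mk (u, v, 0)} only in the range of b₊. -/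

import Mathlib

open scoped LinearAlgebra.Projectivization
open Topology

/-- The quotient topology on the projectivization of a topological vector space. -/
instance projectivizationTopology (K V : Type*) [DivisionRing K] [AddCommGroup V]
    [Module K V] [TopologicalSpace V] : TopologicalSpace (ℙ K V) :=
  inferInstanceAs (TopologicalSpace (Quotient (projectivizationSetoid K V)))

/-- In `ℙ(V₊ ⊕ V₋ ⊕ k)`, the closure of the image of `V₊` under the embedding
`u ↦ [u : 0 : 1]` is the projectivization `ℙ(V₊ ⊕ k)` of the subspace `V₊ ⊕ 0 ⊕ k`. -/
theorem closure_embedding_plus (p q : ℕ) :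
    closure (Set.range (fun u : Fin p → ℂ =>
        Projectivization.mk ℂ ((u, 0, 1) : (Fin p → ℂ) × (Fin q → ℂ) × ℂ)
          (fun h => one_ne_zero (congrArg (fun w : (Fin p → ℂ) × (Fin q → ℂ) × ℂ => w.2.2) h)))) =
      {x : ℙ ℂ ((Fin p → ℂ) × (Fin q → ℂ) × ℂ) |
        ∃ (u : Fin p → ℂ) (c : ℂ) (h : ((u, 0, c) : (Fin p → ℂ) × (Fin q → ℂ) × ℂ) ≠ 0),
          x = Projectivization.mk ℂ (u, 0, c) h} := by
  set W := (Fin p → ℂ) × (Fin q → ℂ) × ℂ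
  letI sd : Setoid {w : W // w ≠ 0} := projectivizationSetoid ℂ W
  have hqm : IsQuotientMap (Quotient.mk'' : {w : W // w ≠ 0} → ℙ ℂ W) :=
    isQuotientMap_quotient_mk'
  apply Set.Subset.antisymm
  · apply closure_minimal
    · rintro _ ⟨u, rfl⟩
      exact ⟨u, 1, _, rfl⟩
    · -- the target set is closed
      apply hqm.isClosed_preimage.mp
      have : (Quotient.mk'' : {w : W // w ≠ 0} → ℙ ℂ W) ⁻¹'
          {x : ℙ ℂ W | ∃ (u : Fin p → ℂ) (c : ℂ) (h : ((u, 0, c) : W) ≠ 0),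
            x = Projectivization.mk ℂ (u, 0, c) h} =
          {w : {w : W // w ≠ 0} | (w : W).2.1 = 0} := by
        ext ⟨w, hw⟩
        simp only [Set.mem_preimage, Set.mem_setOf_eq]
        constructor
        · rintro ⟨u, c, h, hx⟩
          have hx' : Projectivization.mk ℂ w hw = Projectivization.mk ℂ ((u, 0, c) : W) h := hx
          rw [Projectivization.mk_eq_mk_iff] at hx'
          obtain ⟨a, ha⟩ := hx'
          have h0 : w.2.1 = a • (0 : Fin q → ℂ) := congrArg (fun z : W => z.2.1) ha.symm
          simpa using h0
        · intro h21
          have hne : ((w.1, 0, w.2.2) : W) ≠ 0 := by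
            have : ((w.1, 0, w.2.2) : W) = w := by
              ext <;> simp [h21]
            rw [this]; exact hw
          refine ⟨w.1, w.2.2, hne, ?_⟩
          show Projectivization.mk ℂ w hw = Projectivization.mk ℂ ((w.1, 0, w.2.2) : W) hne
          rw [Projectivization.mk_eq_mk_iff]
          refine ⟨1, ?_⟩
          show (1 : ℂˣ) • ((w.1, 0, w.2.2) : W) = w
          ext <;> simp [h21]
      refine (congrArg IsClosed this).mpr ?_
      exact isClosed_eq (f := fun w : {w : W // w ≠ 0} => ((w : W).2.1 : Fin q → ℂ)) (g := fun _ => 0) (continuous_fst.comp (continuous_snd.comp continuous_subtype_val)) continuous_const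
  · rintro x ⟨u, c, h, rfl⟩
    by_cases hc : c = 0
    · -- limit point: here `u ≠ 0`
      subst hc
      have hu : u ≠ 0 := by
        intro hu0
        apply h
        simp [hu0, Prod.ext_iff]
      have hne : ∀ t : ℂ, ((u, 0, t) : W) ≠ 0 := by
        intro t h0
        exact hu (congrArg (fun z : W => z.1) h0)
      have hcont : Continuous fun t : ℂ =>
          ((Quotient.mk'' (⟨(u, 0, t), hne t⟩ : {w : W // w ≠ 0})) : ℙ ℂ W) := by
        exact hqm.continuous.comp (by fun_prop)
      have htd : Filter.Tendsto (fun t : ℂ => Projectivization.mk ℂ ((u, 0, t) : W) (hne t))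
          (nhdsWithin 0 {0}ᶜ) (nhds (Projectivization.mk ℂ ((u, 0, 0) : W) h)) :=
        (hcont.tendsto 0).mono_left nhdsWithin_le_nhds
      refine mem_closure_of_tendsto htd ?_
      filter_upwards [self_mem_nhdsWithin] with t ht
      replace ht : t ≠ 0 := ht
      refine ⟨t⁻¹ • u, ?_⟩
      show Projectivization.mk ℂ ((t⁻¹ • u, 0, 1) : W) _ = Projectivization.mk ℂ ((u, 0, t) : W) _
      rw [Projectivization.mk_eq_mk_iff]
      refine ⟨(Units.mk0 t ht)⁻¹, ?_⟩
      show ((Units.mk0 t ht)⁻¹ : ℂˣ).val • ((u, 0, t) : W) = ((t⁻¹ • u, 0, 1) : W)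
      ext <;> simp [inv_mul_cancel₀ ht]
    · apply subset_closure
      refine ⟨c⁻¹ • u, ?_⟩
      show Projectivization.mk ℂ ((c⁻¹ • u, 0, 1) : W) _ = Projectivization.mk ℂ ((u, 0, c) : W) h
      rw [Projectivization.mk_eq_mk_iff]
      refine ⟨(Units.mk0 c hc)⁻¹, ?_⟩
      show ((Units.mk0 c hc)⁻¹ : ℂˣ).val • ((u, 0, c) : W) = ((c⁻¹ • u, 0, 1) : W)
      ext <;> simp [inv_mul_cancel₀ hc]
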